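/- Let H₀ be a Hermitian n×n complex matrix, Π a Hermitian matrix with H₀Π = E·Π and ΠH₀ = E·Π for a real number E (an eigenprojector of H₀ with eigenvalue E), and γ ≥ 0. Let ψ : ℝ → ℂⁿ be differentiable with ‖ψ(t)‖ = 1 for all t, set ρ(t) := ψ(t)ψ(t)ᴴ, and suppose ρ satisfies the feedback-induced double-bracket equation ρ'(t) = −i⁅H₀, ρ(t)⁆ − γ·⁅⁅H₀², ρ(t)⁆, ρ(t)⁆. Then the population tr(Π ρ(t)) satisfies d/dt tr(Π ρ(t)) = −2γ · tr(Π ρ(t)) · (E² − tr(H₀² ρ(t))). -/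

import Mathlib

open Matrix

attribute [local instance] Matrix.normedAddCommGroup Matrix.normedSpace

private lemma vmv_mul_vmv {n : ℕ} (v w : Fin n → ℂ) (M : Matrix (Fin n) (Fin n) ℂ) :
    vecMulVec v (star v) * M * vecMulVec w (star w)
      = ((star v) ⬝ᵥ (M *ᵥ w)) • vecMulVec v (star w) := by
  ext i j
  simp only [Matrix.mul_apply, vecMulVec_apply, Matrix.smul_apply, dotProduct, mulVec,
    smul_eq_mul, Finset.sum_mul, Finset.mul_sum]
  conv_rhs => rw [Finset.sum_comm]
  refine Finset.sum_congr rfl fun k _ => Finset.sum_congr rfl fun l _ => by ring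

private lemma vmv_sq {n : ℕ} (v : Fin n → ℂ) (h : star v ⬝ᵥ v = 1) :
    vecMulVec v (star v) * vecMulVec v (star v) = vecMulVec v (star v) := by
  ext i j
  simp only [Matrix.mul_apply, vecMulVec_apply]
  have : ∑ k, (v i * star v k) * (v k * star v j)
      = (star v ⬝ᵥ v) * (v i * star v j) := by
    simp only [dotProduct, Finset.sum_mul]
    exact Finset.sum_congr rfl fun k _ => by ring
  rw [this, h, one_mul]

private lemma trace_mul_vmv {n : ℕ} (v : Fin n → ℂ) (M : Matrix (Fin n) (Fin n) ℂ) :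
    (M * vecMulVec v (star v)).trace = (star v) ⬝ᵥ (M *ᵥ v) := by
  simp only [Matrix.trace, Matrix.diag_apply, Matrix.mul_apply, vecMulVec_apply,
    dotProduct, mulVec, Finset.mul_sum]
  refine Finset.sum_congr rfl fun k _ => Finset.sum_congr rfl fun l _ => by ring

/-- Along the feedback-induced double-bracket flow
`ρ'(t) = −i⁅H₀, ρ(t)⁆ − γ⁅⁅H₀², ρ(t)⁆, ρ(t)⁆` of a pure state
`ρ(t) = ψ(t)ψ(t)ᴴ`, the population of an eigenprojector `P` of `H₀` with
eigenvalue `E` satisfies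
`d/dt tr(Pρ(t)) = −2γ tr(Pρ(t)) (E² − tr(H₀²ρ(t)))`. -/
theorem eigenprojector_population_evolution
    (n : ℕ) (H₀ P : Matrix (Fin n) (Fin n) ℂ)
    (hH : H₀ᴴ = H₀) (hP : Pᴴ = P) (E : ℝ)
    (hPE : H₀ * P = (E : ℂ) • P) (hEP : P * H₀ = (E : ℂ) • P)
    (γ : ℝ) (hγ : 0 ≤ γ)
    (ψ : ℝ → Fin n → ℂ) (hψ : Differentiable ℝ ψ)
    (hunit : ∀ t, star (ψ t) ⬝ᵥ ψ t = 1)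
    (ρ : ℝ → Matrix (Fin n) (Fin n) ℂ)
    (hρ : ∀ t, ρ t = vecMulVec (ψ t) (star (ψ t)))
    (hρ' : ∀ t, HasDerivAt ρ
      ((-Complex.I) • ⁅H₀, ρ t⁆ - (γ : ℂ) • ⁅⁅H₀ ^ 2, ρ t⁆, ρ t⁆) t) :
    ∀ t, HasDerivAt (fun s => (P * ρ s).trace)
      (-2 * (γ : ℂ) * (P * ρ t).trace * ((E : ℂ) ^ 2 - (H₀ ^ 2 * ρ t).trace)) t := by
  intro t
  classical
  -- the continuous linear map X ↦ tr (P * X)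
  set L : Matrix (Fin n) (Fin n) ℂ →L[ℝ] ℂ :=
    (((Matrix.traceLinearMap (Fin n) ℂ ℂ).comp
      (LinearMap.mulLeft ℂ P)).restrictScalars ℝ).toContinuousLinearMap with hL
  have hLapp : ∀ X, L X = (P * X).trace := fun X => rfl
  have hder := L.hasFDerivAt.comp_hasDerivAt t (hρ' t)
  have heq : (fun s => (P * ρ s).trace) = fun s => L (ρ s) := by
    funext s; rw [hLapp]
  rw [heq]
  refine hder.congr_deriv ?_
  refine (hLapp _).trans ?_
  set r := ρ t with hrdef
  have hr : r = vecMulVec (ψ t) (star (ψ t)) := hρ t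
  have hrr : r * r = r := by rw [hr]; exact vmv_sq _ (hunit t)
  have hPA : P * H₀ ^ 2 = ((E : ℂ) ^ 2) • P := by
    rw [pow_two, ← mul_assoc, hEP, smul_mul_assoc, hEP, smul_smul, ← pow_two]
  have hAP : H₀ ^ 2 * P = ((E : ℂ) ^ 2) • P := by
    rw [pow_two, mul_assoc, hPE, mul_smul_comm, hPE, smul_smul, ← pow_two]
  have hsand : r * H₀ ^ 2 * r = (H₀ ^ 2 * r).trace • r := by
    rw [hr, vmv_mul_vmv, trace_mul_vmv]
  have h1 : (P * ⁅H₀, r⁆).trace = 0 := by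
    rw [Ring.lie_def, mul_sub, Matrix.trace_sub, ← mul_assoc, hEP,
      Matrix.trace_mul_comm P (r * H₀), mul_assoc, hPE, Matrix.mul_smul,
      Matrix.smul_mul, Matrix.trace_smul, Matrix.trace_smul, Matrix.trace_mul_comm r P]
    ring
  have h2 : (P * ⁅⁅H₀ ^ 2, r⁆, r⁆).trace
      = 2 * (P * r).trace * ((E : ℂ) ^ 2 - (H₀ ^ 2 * r).trace) := by
    have expand : ⁅⁅H₀ ^ 2, r⁆, r⁆
        = H₀ ^ 2 * r - r * H₀ ^ 2 * r - (r * (H₀ ^ 2 * r) - r * (r * H₀ ^ 2)) := by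
      rw [Ring.lie_def, Ring.lie_def]
      rw [sub_mul, mul_sub]
      rw [mul_assoc (H₀ ^ 2) r r, hrr]
    rw [expand]
    have e1 : (P * (H₀ ^ 2 * r)).trace = (E : ℂ) ^ 2 * (P * r).trace := by
      rw [← mul_assoc, hPA, Matrix.smul_mul, Matrix.trace_smul, smul_eq_mul]
    have e1' : (P * H₀ ^ 2 * r).trace = (E : ℂ) ^ 2 * (P * r).trace := by
      rw [mul_assoc]; exact e1
    have e2 : (P * (r * H₀ ^ 2 * r)).trace = (H₀ ^ 2 * r).trace * (P * r).trace := by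
      rw [hsand, Matrix.mul_smul, Matrix.trace_smul, smul_eq_mul]
    have e3 : (P * (r * (H₀ ^ 2 * r))).trace = (H₀ ^ 2 * r).trace * (P * r).trace := by
      rw [← mul_assoc r (H₀ ^ 2) r, hsand, Matrix.mul_smul, Matrix.trace_smul, smul_eq_mul]
    have e4 : (P * (r * (r * H₀ ^ 2))).trace = (E : ℂ) ^ 2 * (P * r).trace := by
      rw [← mul_assoc r r, hrr, Matrix.trace_mul_comm, Matrix.mul_assoc, hAP,
        Matrix.mul_smul, Matrix.trace_smul, smul_eq_mul, Matrix.trace_mul_comm]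
    rw [mul_sub, mul_sub, mul_sub, Matrix.trace_sub, Matrix.trace_sub, Matrix.trace_sub]
    rw [e1, e2, e3, e4]
    ring
  rw [show P * ((-Complex.I) • ⁅H₀, r⁆ - (γ : ℂ) • ⁅⁅H₀ ^ 2, r⁆, r⁆)
      = (-Complex.I) • (P * ⁅H₀, r⁆) - (γ : ℂ) • (P * ⁅⁅H₀ ^ 2, r⁆, r⁆) by
    rw [mul_sub, Matrix.mul_smul, Matrix.mul_smul]]
  rw [Matrix.trace_sub, Matrix.trace_smul, Matrix.trace_smul, h1, h2, smul_eq_mul, smul_eq_mul]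
  ring
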